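/- Let n ≥ 4 be even. Then the set δ_E = {P_x : 1 ≤ x < n/2, x even} ∪ {S_{n/2} ≀ S_2, A_n} is a special basic set for S_n of cardinality ⌈(n+4)/4⌉; in particular γ'(S_n) ≤ ⌈(n+4)/4⌉. Moreover g(n) ≤ ⌈(n+4)/4⌉, with equality if and only if n = 2^α for some integer α ≥ 2, or n = 4q for some prime q. -/

import Mathlib

open Equiv Pointwise

/-- A basic set for `G`: a finite set of proper subgroups whose conjugates cover `G`. -/
def IsBasicSet {G : Type*} [Group G] (δ : Finset (Subgroup G)) : Prop :=
  (∀ H ∈ δ, H ≠ ⊤) ∧ ∀ g : G, ∃ H ∈ δ, ∃ k : G, k * g * k⁻¹ ∈ H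

/-- The normal covering number `γ(G)`. -/
noncomputable def normalCoveringNumber (G : Type*) [Group G] : ℕ :=
  sInf {m | ∃ δ : Finset (Subgroup G), IsBasicSet δ ∧ δ.card = m}

/-- A special metacyclic subgroup of `Sₙ`. -/
def IsSpecialMetacyclic {n : ℕ} (M : Subgroup (Equiv.Perm (Fin n))) : Prop :=
  ∃ σ τ : Equiv.Perm (Fin n), τ.IsSwap ∧ Even (orderOf σ) ∧ Commute σ τ ∧
    Subgroup.zpowers σ ⊓ Subgroup.zpowers τ = ⊥ ∧ M = Subgroup.closure {σ, τ}

/-- A special basic set for `Sₙ`. -/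
def IsSpecialBasicSet {n : ℕ} (δ : Finset (Subgroup (Equiv.Perm (Fin n)))) : Prop :=
  IsBasicSet δ ∧ ∀ M : Subgroup (Equiv.Perm (Fin n)),
    (IsCyclic M ∨ IsSpecialMetacyclic M) →
      ∃ H ∈ δ, ∃ k : Equiv.Perm (Fin n), ∀ x ∈ M, k * x * k⁻¹ ∈ H

/-- The special normal covering number `γ'(Sₙ)`. -/
noncomputable def specialNormalCoveringNumber (n : ℕ) : ℕ :=
  sInf {m | ∃ δ : Finset (Subgroup (Equiv.Perm (Fin n))), IsSpecialBasicSet δ ∧ δ.card = m}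

/-- An intersective polynomial. -/
def IsIntersective (f : Polynomial ℤ) : Prop :=
  f.Monic ∧ (∀ q : ℚ, Polynomial.aeval q f ≠ 0) ∧
    ∀ m : ℕ, 0 < m → ∃ a : ℤ, (m : ℤ) ∣ f.eval a

/-- `r(Sₙ)`: the least number of irreducible factors of an intersective polynomial with
Galois group `Sₙ` over `ℚ`. -/
noncomputable def rS (n : ℕ) : ℕ :=
  sInf {k | ∃ f : Polynomial ℤ, IsIntersective f ∧
    (∃ gs : Multiset (Polynomial ℤ), Multiset.card gs = k ∧
      (∀ g ∈ gs, g.Monic ∧ 0 < g.natDegree ∧ Irreducible g) ∧ f = gs.prod) ∧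
    Nonempty ((f.map (algebraMap ℤ ℚ)).Gal ≃* Equiv.Perm (Fin n))}

/-- Number of distinct prime factors of `n`. -/
def nuFun (n : ℕ) : ℕ := n.primeFactors.card

/-- The smallest prime factor `p₁` of `n`. -/
def pOne (n : ℕ) : ℕ := n.minFac

/-- The second smallest prime factor `p₂` of `n`. -/
def pTwo (n : ℕ) : ℕ := (n / (pOne n) ^ (n.factorization (pOne n))).minFac

/-- The function `g`:
`g(n) = (n/2)(1 - 1/p₁)` if `ν(n) = 1, α₁ = 1`;
`g(n) = (n/2)(1 - 1/p₁) + 1` if `ν(n) = 1, α₁ ≥ 2`;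
`g(n) = (n/2)(1 - 1/p₁)(1 - 1/p₂) + 1` if `ν(n) = 2, (α₁, α₂) = (1,1)`;
`g(n) = (n/2)(1 - 1/p₁)(1 - 1/p₂) + 2` otherwise.
(All the divisions below are exact.) -/
def gFun (n : ℕ) : ℕ :=
  if nuFun n = 1 then
    (if n.factorization (pOne n) = 1 then n * (pOne n - 1) / (2 * pOne n)
     else n * (pOne n - 1) / (2 * pOne n) + 1)
  else if nuFun n = 2 ∧ n.factorization (pOne n) = 1 ∧ n.factorization (pTwo n) = 1 then
    n * ((pOne n - 1) * (pTwo n - 1)) / (2 * pOne n * pTwo n) + 1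
  else n * ((pOne n - 1) * (pTwo n - 1)) / (2 * pOne n * pTwo n) + 2


/-- `P x`, the setwise stabilizer of `{0, …, x-1}` in `Sₙ`. -/
def Pstab (n x : ℕ) : Subgroup (Equiv.Perm (Fin n)) :=
  MulAction.stabilizer (Equiv.Perm (Fin n)) ({a : Fin n | (a : ℕ) < x} : Set (Fin n))

/-- The stabilizer `S_b ≀ S_{n/b}` in `Sₙ` of the partition of `{0,…,n-1}` into consecutive
blocks of size `b`. -/
def blockStab (n b : ℕ) : Subgroup (Equiv.Perm (Fin n)) where
  carrier := {ψ | ∀ a c : Fin n, (ψ a : ℕ) / b = (ψ c : ℕ) / b ↔ (a : ℕ) / b = (c : ℕ) / b}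
  one_mem' := by intro a c; simp
  mul_mem' := by
    intro ψ φ hψ hφ a c
    simp only [Equiv.Perm.mul_apply]
    exact (hψ _ _).trans (hφ _ _)
  inv_mem' := by
    intro ψ hψ a c
    simpa using (hψ (ψ⁻¹ a) (ψ⁻¹ c)).symm

open scoped Classical in
/-- The set `δ_E = {P_x : 1 ≤ x < n/2, x even} ∪ {S_{n/2} ≀ S₂, Aₙ}`. -/
noncomputable def deltaE (n : ℕ) : Finset (Subgroup (Equiv.Perm (Fin n))) :=
  ((Finset.Ico 1 (n / 2)).filter (fun x => Even x)).image (Pstab n) ∪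
    {blockStab n (n / 2), alternatingGroup (Fin n)}



section Aux

lemma smul_set_iff {α : Type*} (ψ : Equiv.Perm α) (S : Set α) :
    ψ • S = S ↔ ∀ a, ψ a ∈ S ↔ a ∈ S := by
  constructor
  · intro h a
    constructor
    · intro ha
      rw [← h] at ha
      obtain ⟨y, hy, hya⟩ := ha
      rwa [← ψ.injective (show ψ y = ψ a from hya)]
    · intro ha
      rw [← h]
      exact ⟨a, ha, rfl⟩
  · intro h
    ext y
    constructor
    · rintro ⟨z, hz, rfl⟩
      exact (h z).2 hz
    · intro hy
      exact ⟨ψ⁻¹ y, (h (ψ⁻¹ y)).1 (by simpa using hy), by simp⟩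

lemma mem_Pstab_iff {n x : ℕ} (ψ : Equiv.Perm (Fin n)) :
    ψ ∈ Pstab n x ↔ ∀ a : Fin n, ((ψ a : ℕ) < x ↔ (a : ℕ) < x) := by
  rw [Pstab, MulAction.mem_stabilizer_iff, smul_set_iff]
  rfl

lemma commute_mem_support_iff {α : Type*} [Fintype α] [DecidableEq α]
    {σ c : Equiv.Perm α} (h : Commute σ c) (y : α) :
    σ y ∈ c.support ↔ y ∈ c.support := by
  simp only [Equiv.Perm.mem_support]
  constructor
  · intro hy hc
    apply hy
    have := congrArg (fun p : Equiv.Perm α => p y) h.eq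
    simp only [Equiv.Perm.mul_apply] at this
    rw [← this, hc]
  · intro hy hc
    apply hy
    have := congrArg (fun p : Equiv.Perm α => p y) h.eq
    simp only [Equiv.Perm.mul_apply] at this
    apply σ.injective
    rw [this, hc]

lemma card_filter_lt {n x : ℕ} (hx : x ≤ n) :
    (Finset.univ.filter (fun a : Fin n => (a : ℕ) < x)).card = x := by
  have : (Finset.univ.filter (fun a : Fin n => (a : ℕ) < x))
      = Finset.map (Fin.castLEEmb hx) Finset.univ := by
    ext a
    simp only [Finset.mem_filter, Finset.mem_univ, true_and, Finset.mem_map]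
    constructor
    · intro ha
      exact ⟨⟨(a : ℕ), ha⟩, by simp [Fin.castLEEmb, Fin.castLE]⟩
    · rintro ⟨i, -, rfl⟩
      exact i.isLt
  rw [this, Finset.card_map, Finset.card_univ, Fintype.card_fin]

/-- key conjugator: `k` maps `s` to the initial segment, uniformly for all `ψ` preserving `s`. -/
lemma key_k {n : ℕ} (s : Finset (Fin n)) (hs : s.card ≤ n) :
    ∃ k : Equiv.Perm (Fin n), ∀ ψ : Equiv.Perm (Fin n), (∀ a, ψ a ∈ s ↔ a ∈ s) →
      ∀ a : Fin n, (((k * ψ * k⁻¹) a : ℕ) < s.card ↔ (a : ℕ) < s.card) := by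
  classical
  set T := Finset.univ.filter (fun a : Fin n => (a : ℕ) < s.card) with hT
  have hcard : s.card = T.card := (card_filter_lt hs).symm
  set e := Finset.equivOfCardEq hcard
  set k := Equiv.extendSubtype (p := (· ∈ s)) (q := (· ∈ T)) e with hk
  have hmem : ∀ z : Fin n, z ∈ s ↔ k z ∈ T := by
    intro z
    constructor
    · exact fun h => Equiv.extendSubtype_mem e z h
    · intro h
      by_contra hz
      exact Equiv.extendSubtype_not_mem e z hz h
  have hTlt : ∀ z : Fin n, z ∈ T ↔ (z : ℕ) < s.card := by
    intro z; simp [hT]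
  refine ⟨k, fun ψ hψ a => ?_⟩
  have : (k * ψ * k⁻¹) a ∈ T ↔ a ∈ T := by
    simp only [Equiv.Perm.mul_apply]
    rw [← hmem, hψ, hmem]
    simp
  rw [← hTlt, ← hTlt]
  exact this


lemma mem_blockStab_iff {n b : ℕ} (ψ : Equiv.Perm (Fin n)) :
    ψ ∈ blockStab n b ↔
      ∀ a c : Fin n, ((ψ a : ℕ) / b = (ψ c : ℕ) / b ↔ (a : ℕ) / b = (c : ℕ) / b) :=
  Iff.rfl

lemma div_two_blocks {b v : ℕ} (hb : 0 < b) (hv : v < 2 * b) :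
    v / b = if v < b then 0 else 1 := by
  split
  · exact Nat.div_eq_of_lt ‹_›
  · exact Nat.div_eq_of_lt_le (by omega) (by omega)

lemma mem_blockStab_of_indicator {n b : ℕ} (hb : 0 < b) (hnb : n = 2 * b)
    (ψ : Equiv.Perm (Fin n))
    (h : (∀ a : Fin n, ((ψ a : ℕ) < b ↔ (a : ℕ) < b)) ∨
         (∀ a : Fin n, ((ψ a : ℕ) < b ↔ ¬ (a : ℕ) < b))) :
    ψ ∈ blockStab n b := by
  intro a c
  have h1 : ((ψ a : ℕ)) < 2 * b := by have := (ψ a).isLt; omega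
  have h2 : ((ψ c : ℕ)) < 2 * b := by have := (ψ c).isLt; omega
  have h3 : ((a : ℕ)) < 2 * b := by have := a.isLt; omega
  have h4 : ((c : ℕ)) < 2 * b := by have := c.isLt; omega
  rw [div_two_blocks hb h1, div_two_blocks hb h2, div_two_blocks hb h3, div_two_blocks hb h4]
  rcases h with h | h <;>
    simp only [h a, h c] <;>
    by_cases hc : (c : ℕ) < b <;> by_cases ha : (a : ℕ) < b <;> simp [ha, hc]

/-- the interleaving permutation `d`. -/
def interleave (b : ℕ) : Equiv.Perm (Fin (2 * b)) where
  toFun i := ⟨if (i : ℕ) % 2 = 0 then (i : ℕ) / 2 else b + (i : ℕ) / 2, by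
    have := i.isLt; split <;> omega⟩
  invFun j := ⟨if (j : ℕ) < b then 2 * (j : ℕ) else 2 * ((j : ℕ) - b) + 1, by
    have := j.isLt; split <;> omega⟩
  left_inv i := by
    ext
    have := i.isLt
    simp only []
    split
    · have h2 : (i : ℕ) / 2 < b := by omega
      simp only [if_pos h2]; omega
    · have h2 : ¬ (b + (i : ℕ) / 2 < b) := by omega
      simp only [if_neg h2]; omega
  right_inv j := by
    ext
    have := j.isLt
    simp only []
    split
    · have h2 : 2 * (j : ℕ) % 2 = 0 := by omega
      simp only [if_pos h2]; omega
    · have h2 : ¬ ((2 * ((j : ℕ) - b) + 1) % 2 = 0) := by omega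
      simp only [if_neg h2]; omega


lemma finRotate_val {N : ℕ} (hN : 2 ≤ N) (i : Fin N) :
    ((finRotate N i : ℕ)) = ((i : ℕ) + 1) % N := by
  obtain ⟨m, rfl⟩ : ∃ m, N = m + 2 := ⟨N - 2, by omega⟩
  rw [finRotate_succ_apply, Fin.val_add, Fin.val_one]

lemma interleave_val (b : ℕ) (i : Fin (2 * b)) :
    ((interleave b i : ℕ)) =
      if (i : ℕ) % 2 = 0 then (i : ℕ) / 2 else b + (i : ℕ) / 2 := rfl

lemma interleave_symm_val (b : ℕ) (j : Fin (2 * b)) :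
    (((interleave b).symm j : ℕ)) =
      if (j : ℕ) < b then 2 * (j : ℕ) else 2 * ((j : ℕ) - b) + 1 := rfl

/-- the block-swapping `2b`-cycle. -/
noncomputable def rho (b : ℕ) : Equiv.Perm (Fin (2 * b)) :=
  (interleave b) * (finRotate (2 * b)) * (interleave b)⁻¹

lemma rho_indicator {b : ℕ} (hb : 2 ≤ b) (x : Fin (2 * b)) :
    ((rho b x : ℕ) < b ↔ ¬ (x : ℕ) < b) := by
  have hx := x.isLt
  set y := (interleave b).symm x with hy0
  set z := finRotate (2 * b) y with hz0
  have hval : (rho b x : ℕ) = ((interleave b) z : ℕ) := by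
    rw [rho]
    simp [Equiv.Perm.mul_apply, Equiv.Perm.inv_def, hz0, hy0]
  have hy : (y : ℕ) = if (x : ℕ) < b then 2 * (x : ℕ) else 2 * ((x : ℕ) - b) + 1 :=
    interleave_symm_val b x
  have hz : (z : ℕ) = ((y : ℕ) + 1) % (2 * b) := finRotate_val (by omega) y
  have hrho : (rho b x : ℕ) =
      if (z : ℕ) % 2 = 0 then (z : ℕ) / 2 else b + (z : ℕ) / 2 := by
    rw [hval]; exact interleave_val b z
  by_cases h : (x : ℕ) < b
  · rw [if_pos h] at hy
    have hzv : (z : ℕ) = 2 * (x : ℕ) + 1 := by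
      rw [hz, hy]; exact Nat.mod_eq_of_lt (by omega)
    rw [hrho, hzv]
    have h2 : ¬ ((2 * (x : ℕ) + 1) % 2 = 0) := by omega
    rw [if_neg h2]
    simp only [h, not_true_eq_false, iff_false, not_lt]
    omega
  · rw [if_neg h] at hy
    by_cases h3 : (x : ℕ) = 2 * b - 1
    · have hzv : (z : ℕ) = 0 := by
        rw [hz, hy]
        have : 2 * ((x : ℕ) - b) + 1 + 1 = 2 * b := by omega
        rw [this, Nat.mod_self]
      rw [hrho, hzv]
      norm_num
      omega
    · have hzv : (z : ℕ) = 2 * ((x : ℕ) - b + 1) := by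
        rw [hz, hy]
        have : 2 * ((x : ℕ) - b) + 1 + 1 = 2 * ((x : ℕ) - b + 1) := by omega
        rw [this]; exact Nat.mod_eq_of_lt (by omega)
      rw [hrho, hzv]
      have h5 : (2 * ((x : ℕ) - b + 1)) % 2 = 0 := by omega
      rw [if_pos h5]
      simp only [h, not_false_eq_true, iff_true]
      omega

lemma rho_isCycle {b : ℕ} (hb : 2 ≤ b) : (rho b).IsCycle := by
  apply Equiv.Perm.IsCycle.conj
  have : ∃ m, 2 * b = m + 2 := ⟨2 * b - 2, by omega⟩
  obtain ⟨m, hm⟩ := this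
  rw [hm]
  exact isCycle_finRotate

lemma rho_support_card {b : ℕ} (hb : 2 ≤ b) : (rho b).support.card = 2 * b := by
  rw [rho, Equiv.Perm.support_conj, Finset.card_map]
  have : ∃ m, 2 * b = m + 2 := ⟨2 * b - 2, by omega⟩
  obtain ⟨m, hm⟩ := this
  rw [hm]
  rw [support_finRotate, Finset.card_univ, Fintype.card_fin]

lemma ncycle_blockStab {b : ℕ} (hb : 2 ≤ b) (σ : Equiv.Perm (Fin (2 * b)))
    (hσ : σ.IsCycle) (hsupp : σ.support.card = 2 * b) :
    ∃ k : Equiv.Perm (Fin (2 * b)), k * σ * k⁻¹ ∈ blockStab (2 * b) b := by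
  have hconj : IsConj σ (rho b) :=
    hσ.isConj (rho_isCycle hb) (by rw [hsupp, rho_support_card hb])
  obtain ⟨k, hk⟩ := isConj_iff.mp hconj
  refine ⟨k, ?_⟩
  rw [hk]
  exact mem_blockStab_of_indicator (by omega) rfl _ (Or.inr (fun a => rho_indicator hb a))


-- membership helpers for deltaE
lemma alternating_mem_deltaE (n : ℕ) : alternatingGroup (Fin n) ∈ deltaE n := by
  classical
  simp [deltaE]

lemma blockStab_mem_deltaE (n : ℕ) : blockStab n (n / 2) ∈ deltaE n := by
  classical
  simp [deltaE]

lemma Pstab_mem_deltaE {n x : ℕ} (h1 : 1 ≤ x) (h2 : x < n / 2) (h3 : Even x) :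
    Pstab n x ∈ deltaE n := by
  classical
  simp only [deltaE, Finset.mem_union, Finset.mem_image, Finset.mem_filter, Finset.mem_Ico]
  exact Or.inl ⟨x, ⟨⟨h1, h2⟩, h3⟩, rfl⟩

lemma odd_mult_even (M : Multiset ℕ) (h : ∀ e ∈ M, ¬ Even e) :
    Even (M.sum + Multiset.card M) := by
  induction M using Multiset.induction_on with
  | empty => simp
  | cons a s ih =>
    have ha := h a (Multiset.mem_cons_self a s)
    have ih' := ih (fun e he => h e (Multiset.mem_cons_of_mem he))
    rw [Nat.even_iff] at ih' ⊢
    rw [Nat.not_even_iff] at ha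
    simp only [Multiset.sum_cons, Multiset.card_cons]
    omega

lemma exists_even_cycle {n : ℕ} {σ : Equiv.Perm (Fin n)}
    (h : Equiv.Perm.sign σ = -1) :
    ∃ c ∈ σ.cycleFactorsFinset, Even c.support.card := by
  by_contra hcon
  push_neg at hcon
  have hodd : ∀ e ∈ σ.cycleType, ¬ Even e := by
    intro e he
    rw [Equiv.Perm.cycleType_def, Multiset.mem_map] at he
    obtain ⟨c, hc, rfl⟩ := he
    exact hcon c hc
  have := Equiv.Perm.sign_of_cycleType σ
  rw [(odd_mult_even _ hodd).neg_one_pow] at this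
  rw [h] at this
  exact absurd this.symm (by decide)

lemma cyclic_cover {b : ℕ} (hb : 2 ≤ b) (σ : Equiv.Perm (Fin (2 * b))) :
    ∃ H ∈ deltaE (2 * b), ∃ k : Equiv.Perm (Fin (2 * b)), k * σ * k⁻¹ ∈ H := by
  classical
  have hdiv : 2 * b / 2 = b := by omega
  rcases Int.units_eq_one_or (Equiv.Perm.sign σ) with hs | hs
  · exact ⟨alternatingGroup (Fin (2 * b)), alternating_mem_deltaE _, 1, by
      simpa [Equiv.Perm.mem_alternatingGroup] using hs⟩
  obtain ⟨c, hc, he⟩ := exists_even_cycle hs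
  have hcyc : c.IsCycle := (Equiv.Perm.mem_cycleFactorsFinset_iff.mp hc).1
  have he2 : 2 ≤ c.support.card := hcyc.two_le_card_support
  have hinv : ∀ a, σ a ∈ c.support ↔ a ∈ c.support :=
    fun a => (Equiv.Perm.mem_cycleFactorsFinset_support hc a)
  have hcle : c.support.card ≤ 2 * b := by
    simpa using Finset.card_le_univ c.support
  rcases lt_trichotomy c.support.card b with hlt | heq | hgt
  · -- P_{e}
    obtain ⟨k, hk⟩ := key_k c.support (by omega)
    refine ⟨Pstab (2 * b) c.support.card, ?_, k, ?_⟩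
    · exact Pstab_mem_deltaE (by omega) (by omega) he
    · rw [mem_Pstab_iff]
      exact hk σ hinv
  · -- block stabilizer, invariant half
    obtain ⟨k, hk⟩ := key_k c.support (by omega)
    refine ⟨blockStab (2 * b) (2 * b / 2), blockStab_mem_deltaE _, k, ?_⟩
    rw [hdiv]
    apply mem_blockStab_of_indicator (by omega) rfl
    left
    intro a
    have := hk σ hinv a
    rwa [heq] at this
  · rcases eq_or_lt_of_le hcle with heqn | hltn
    · -- σ is a 2b-cycle
      have hsupp : c.support = Finset.univ :=
        Finset.eq_univ_of_card _ (by simp [heqn])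
      have hcσ : c = σ := by
        apply Equiv.ext
        intro a
        exact (Equiv.Perm.mem_cycleFactorsFinset_iff.mp hc).2 a
          (by rw [hsupp]; exact Finset.mem_univ a)
      obtain ⟨k, hk⟩ := ncycle_blockStab hb σ (hcσ ▸ hcyc) (by rw [← hcσ, heqn])
      refine ⟨blockStab (2 * b) (2 * b / 2), blockStab_mem_deltaE _, k, ?_⟩
      rwa [hdiv]
    · -- complement, P_{2b - e}
      set s := c.supportᶜ with hs
      have hscard : s.card = 2 * b - c.support.card := by
        rw [hs, Finset.card_compl]
        simp
      have hsinv : ∀ a, σ a ∈ s ↔ a ∈ s := by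
        intro a
        rw [hs, Finset.mem_compl, Finset.mem_compl]
        exact not_congr (hinv a)
      obtain ⟨k, hk⟩ := key_k s (by omega)
      refine ⟨Pstab (2 * b) s.card, ?_, k, ?_⟩
      · refine Pstab_mem_deltaE (by omega) (by omega) ?_
        obtain ⟨t, ht⟩ := he
        rw [hscard]
        exact ⟨b - t, by omega⟩
      · rw [mem_Pstab_iff]
        exact hk σ hsinv


lemma metacyclic_cover {b : ℕ} (hb : 2 ≤ b) (M : Subgroup (Equiv.Perm (Fin (2 * b))))
    (h : IsSpecialMetacyclic M) :
    ∃ H ∈ deltaE (2 * b), ∃ k : Equiv.Perm (Fin (2 * b)), ∀ x ∈ M, k * x * k⁻¹ ∈ H := by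
  classical
  obtain ⟨σ, τ, hsw, -, hcomm, -, rfl⟩ := h
  obtain ⟨a, a', haa, rfl⟩ := hsw
  set s : Finset (Fin (2 * b)) := (Equiv.swap a a').support with hs
  have hscard : s.card = 2 := by
    rw [hs, Equiv.Perm.support_swap haa]
    rw [Finset.card_insert_of_notMem (by simpa using haa), Finset.card_singleton]
  have hσs : ∀ y, σ y ∈ s ↔ y ∈ s :=
    fun y => (Equiv.Perm.mem_support_iff_of_commute hcomm y)
  have hτs : ∀ y, (Equiv.swap a a') y ∈ s ↔ y ∈ s :=
    fun y => (Equiv.Perm.mem_support_iff_of_commute (Commute.refl _) y)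
  -- all elements of the closure preserve s
  have hM : ∀ x ∈ Subgroup.closure {σ, Equiv.swap a a'}, ∀ y, x y ∈ s ↔ y ∈ s := by
    intro x hx
    have hle : Subgroup.closure {σ, Equiv.swap a a'} ≤
        MulAction.stabilizer (Equiv.Perm (Fin (2 * b))) ((s : Set (Fin (2 * b)))) := by
      rw [Subgroup.closure_le]
      rintro z (rfl | rfl)
      · rw [SetLike.mem_coe, MulAction.mem_stabilizer_iff, smul_set_iff]
        intro y; simpa using hσs y
      · rw [SetLike.mem_coe, MulAction.mem_stabilizer_iff, smul_set_iff]
        intro y; simpa using hτs y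
    have := hle hx
    rw [MulAction.mem_stabilizer_iff, smul_set_iff] at this
    intro y
    simpa using this y
  obtain ⟨k, hk⟩ := key_k s (by omega)
  rcases eq_or_lt_of_le hb with hb2 | hb3
  · -- b = 2 : block stabilizer
    subst hb2
    refine ⟨blockStab (2 * 2) (2 * 2 / 2), blockStab_mem_deltaE _, k, ?_⟩
    intro x hx
    have hdiv : (2 * 2 / 2 : ℕ) = 2 := rfl
    rw [hdiv]
    apply mem_blockStab_of_indicator (n := 2 * 2) (b := 2) (by omega) rfl
    left
    intro y
    have := hk x (hM x hx) y
    rwa [hscard] at this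
  · -- b ≥ 3 : P_2
    refine ⟨Pstab (2 * b) 2, Pstab_mem_deltaE (by omega) (by omega) (by decide), k, ?_⟩
    intro x hx
    rw [mem_Pstab_iff]
    intro y
    have := hk x (hM x hx) y
    rwa [hscard] at this




-- swap ⟨0⟩ ⟨u⟩ is in Pstab n x iff behaviour; helper membership lemmas
lemma swap_mem_Pstab {n x : ℕ} {u v : Fin n} (hu : (u : ℕ) < x ↔ (v : ℕ) < x) :
    Equiv.swap u v ∈ Pstab n x := by
  rw [mem_Pstab_iff]
  intro a
  rcases eq_or_ne a u with rfl | hau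
  · rw [Equiv.swap_apply_left]; exact hu.symm
  rcases eq_or_ne a v with rfl | hav
  · rw [Equiv.swap_apply_right]; exact hu
  · rw [Equiv.swap_apply_of_ne_of_ne hau hav]

lemma swap_not_mem_Pstab {n x : ℕ} {u v : Fin n} (h1 : (u : ℕ) < x) (h2 : ¬ (v : ℕ) < x) :
    Equiv.swap u v ∉ Pstab n x := by
  rw [mem_Pstab_iff]
  intro h
  have := h u
  rw [Equiv.swap_apply_left] at this
  exact h2 (this.mpr h1)

lemma swap_not_mem_alternating {n : ℕ} {u v : Fin n} (huv : u ≠ v) :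
    Equiv.swap u v ∉ alternatingGroup (Fin n) := by
  rw [Equiv.Perm.mem_alternatingGroup, Equiv.Perm.sign_swap huv]
  decide

lemma Pstab_ne_top {n x : ℕ} (h1 : 1 ≤ x) (h2 : x < n) : Pstab n x ≠ ⊤ := by
  intro h
  have : Equiv.swap (⟨0, by omega⟩ : Fin n) ⟨x, h2⟩ ∈ Pstab n x := by
    rw [h]; exact Subgroup.mem_top _
  exact swap_not_mem_Pstab (show (0:ℕ) < x by omega) (show ¬ (x:ℕ) < x by omega) this

lemma blockStab_ne_top {n b : ℕ} (hb : 2 ≤ b) (hnb : n = 2 * b) : blockStab n b ≠ ⊤ := by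
  intro h
  have hmem : Equiv.swap (⟨0, by omega⟩ : Fin n) ⟨n - 1, by omega⟩ ∈ blockStab n b := by
    rw [h]; exact Subgroup.mem_top _
  rw [mem_blockStab_iff] at hmem
  have this1 := hmem ⟨0, by omega⟩ ⟨1, by omega⟩
  rw [Equiv.swap_apply_left,
    Equiv.swap_apply_of_ne_of_ne (by simp [Fin.ext_iff]) (by simp [Fin.ext_iff]; omega)] at this1
  have this2 : (n - 1) / b = 1 / b ↔ 0 / b = 1 / b := this1
  rw [Nat.div_eq_of_lt_le (k := 1) (by omega) (by omega), Nat.div_eq_of_lt (by omega),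
    Nat.div_eq_of_lt (by omega)] at this2
  simp at this2

lemma alternating_ne_top {n : ℕ} (hn : 2 ≤ n) : alternatingGroup (Fin n) ≠ ⊤ := by
  intro h
  have : Equiv.swap (⟨0, by omega⟩ : Fin n) ⟨1, by omega⟩ ∈ alternatingGroup (Fin n) := by
    rw [h]; exact Subgroup.mem_top _
  exact swap_not_mem_alternating (by simp [Fin.ext_iff]) this

lemma swap01_mem_blockStab {n b : ℕ} (hb : 2 ≤ b) (hnb : n = 2 * b) :
    Equiv.swap (⟨0, by omega⟩ : Fin n) ⟨1, by omega⟩ ∈ blockStab n b := by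
  apply mem_blockStab_of_indicator (by omega) hnb
  left
  intro a
  rcases eq_or_ne a ⟨0, by omega⟩ with rfl | h0
  · rw [Equiv.swap_apply_left]
    show (1 : ℕ) < b ↔ (0 : ℕ) < b
    omega
  rcases eq_or_ne a ⟨1, by omega⟩ with rfl | h1
  · rw [Equiv.swap_apply_right]
    show (0 : ℕ) < b ↔ (1 : ℕ) < b
    omega
  · rw [Equiv.swap_apply_of_ne_of_ne h0 h1]

lemma Pstab_ne_blockStab {n x b : ℕ} (hb : 2 ≤ b) (hnb : n = 2 * b)
    (h1 : 1 ≤ x) (h2 : x < b) : Pstab n x ≠ blockStab n b := by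
  intro h
  have hmem : Equiv.swap (⟨x, by omega⟩ : Fin n) ⟨n - 1, by omega⟩ ∈ Pstab n x :=
    swap_mem_Pstab (show (x < x ↔ n - 1 < x) by omega)
  rw [h, mem_blockStab_iff] at hmem
  have this1 := hmem ⟨x, by omega⟩ ⟨0, by omega⟩
  rw [Equiv.swap_apply_left,
    Equiv.swap_apply_of_ne_of_ne (by simp [Fin.ext_iff]; omega) (by simp [Fin.ext_iff]; omega)] at this1
  have this2 : (n - 1) / b = 0 / b ↔ x / b = 0 / b := this1
  rw [Nat.div_eq_of_lt_le (k := 1) (by omega) (by omega), Nat.div_eq_of_lt (by omega),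
    Nat.div_eq_of_lt (by omega)] at this2
  simp at this2

lemma Pstab_ne_alternating {n x : ℕ} (hx : 2 ≤ x) (hn : x ≤ n) :
    Pstab n x ≠ alternatingGroup (Fin n) := by
  intro h
  have hmem : Equiv.swap (⟨0, by omega⟩ : Fin n) ⟨1, by omega⟩ ∈ Pstab n x :=
    swap_mem_Pstab (show ((0:ℕ) < x ↔ (1:ℕ) < x) by omega)
  rw [h] at hmem
  exact swap_not_mem_alternating (by simp [Fin.ext_iff]) hmem

lemma blockStab_ne_alternating {n b : ℕ} (hb : 2 ≤ b) (hnb : n = 2 * b) :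
    blockStab n b ≠ alternatingGroup (Fin n) := by
  intro h
  have := swap01_mem_blockStab hb hnb
  rw [h] at this
  exact swap_not_mem_alternating (by simp [Fin.ext_iff]) this

lemma Pstab_ne_of_lt {n x y : ℕ} (hx1 : 1 ≤ x) (hxn : x < n) (hxy : x < y) :
    Pstab n x ≠ Pstab n y := by
  intro h
  have hmem : Equiv.swap (⟨0, by omega⟩ : Fin n) ⟨x, hxn⟩ ∈ Pstab n y :=
    swap_mem_Pstab (show ((0:ℕ) < y ↔ x < y) by omega)
  rw [← h] at hmem
  exact swap_not_mem_Pstab (show (0:ℕ) < x by omega) (show ¬ (x:ℕ) < x by omega) hmem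

lemma Pstab_injOn {n : ℕ} {x y : ℕ} (hx1 : 1 ≤ x) (hy1 : 1 ≤ y) (hxn : x < n) (hyn : y < n)
    (hne : x ≠ y) : Pstab n x ≠ Pstab n y := by
  rcases hne.lt_or_gt with hxy | hxy
  · exact Pstab_ne_of_lt hx1 hxn hxy
  · exact (Pstab_ne_of_lt hy1 hyn hxy).symm

lemma filter_even_Ico_card (b : ℕ) :
    ((Finset.Ico 1 b).filter (fun x => Even x)).card = (b + 1) / 2 - 1 := by
  classical
  have himg : (Finset.Ico 1 b).filter (fun x => Even x)
      = (Finset.Ico 1 ((b + 1) / 2)).image (fun y => 2 * y) := by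
    ext z
    simp only [Finset.mem_filter, Finset.mem_Ico, Finset.mem_image]
    constructor
    · rintro ⟨⟨hz1, hzb⟩, ⟨t, rfl⟩⟩
      exact ⟨t, ⟨by omega, by omega⟩, by omega⟩
    · rintro ⟨t, ⟨ht1, ht2⟩, rfl⟩
      exact ⟨⟨by omega, by omega⟩, ⟨t, by omega⟩⟩
  rw [himg, Finset.card_image_of_injective _ (fun a c h => by omega), Nat.card_Ico]

lemma deltaE_card {b : ℕ} (hb : 2 ≤ b) : (deltaE (2 * b)).card = (2 * b + 7) / 4 := by
  classical
  have hdiv : 2 * b / 2 = b := by omega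
  rw [deltaE, hdiv]
  rw [Finset.card_union_of_disjoint]
  · rw [Finset.card_image_of_injOn]
    · rw [filter_even_Ico_card]
      rw [Finset.card_insert_of_notMem (by
        simp only [Finset.mem_singleton]
        exact blockStab_ne_alternating hb rfl), Finset.card_singleton]
      omega
    · intro x hx y hy hne
      simp only [Finset.coe_filter, Finset.mem_Ico, Set.mem_setOf_eq] at hx hy
      by_contra hcon
      exact Pstab_injOn (by omega) (by omega) (by omega) (by omega) hcon hne
  · rw [Finset.disjoint_left]
    intro H hH
    simp only [Finset.mem_image, Finset.mem_filter, Finset.mem_Ico] at hH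
    obtain ⟨x, ⟨⟨hx1, hx2⟩, hxe⟩, rfl⟩ := hH
    simp only [Finset.mem_insert, Finset.mem_singleton]
    push_neg
    constructor
    · exact Pstab_ne_blockStab hb rfl hx1 hx2
    · have hx2' : 2 ≤ x := by
        obtain ⟨t, rfl⟩ := hxe; omega
      exact Pstab_ne_alternating hx2' (by omega)


lemma gFun_facts (n : ℕ) (hn : 4 ≤ n) (he : Even n) :
    gFun n ≤ (n + 7) / 4 ∧ (gFun n = (n + 7) / 4 ↔
      (∃ α : ℕ, 2 ≤ α ∧ n = 2 ^ α) ∨ (∃ q : ℕ, q.Prime ∧ n = 4 * q)) := by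
  have hn0 : n ≠ 0 := by omega
  have h2d : (2 : ℕ) ∣ n := he.two_dvd
  have hp1 : pOne n = 2 :=
    le_antisymm (Nat.minFac_le_of_dvd le_rfl h2d) (Nat.minFac_prime (by omega)).two_le
  obtain ⟨a, m, hfact, hm2, hfa, hmeq⟩ :
      ∃ a m, 2 ^ a * m = n ∧ ¬ (2:ℕ) ∣ m ∧ n.factorization 2 = a ∧ m = n / 2 ^ a := by
    refine ⟨n.factorization 2, n / 2 ^ (n.factorization 2), ?_, ?_, rfl, rfl⟩
    · exact Nat.ordProj_mul_ordCompl_eq_self n 2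
    · exact Nat.not_dvd_ordCompl Nat.prime_two hn0
  have hm0 : m ≠ 0 := by
    intro h; rw [h, mul_zero] at hfact; omega
  have ha1 : 1 ≤ a := by
    rw [← hfa]
    exact Nat.Prime.factorization_pos_of_dvd Nat.prime_two hn0 h2d
  have hpTwo : pTwo n = m.minFac := by
    rw [pTwo, hp1, hfa, ← hmeq]
  by_cases hm1 : m = 1
  · -- n = 2 ^ a, a ≥ 2
    have hpow : n = 2 ^ a := by rw [← hfact, hm1, mul_one]
    have ha2 : 2 ≤ a := by
      by_contra hcon
      interval_cases a <;> omega
    have hν : nuFun n = 1 := by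
      rw [nuFun, hpow, Nat.primeFactors_prime_pow (by omega) Nat.prime_two,
        Finset.card_singleton]
    have h4 : 4 ∣ n := by
      rw [hpow]
      have : (2:ℕ) ^ 2 ∣ 2 ^ a := pow_dvd_pow 2 ha2
      simpa using this
    have hval : gFun n = n / 4 + 1 := by
      rw [gFun, if_pos hν, hp1, hfa, if_neg (by omega)]
      norm_num
    obtain ⟨c, hc⟩ := h4
    constructor
    · rw [hval]; omega
    · rw [hval]
      constructor
      · intro _; exact Or.inl ⟨a, ha2, hpow⟩
      · intro _; omega
  · -- m > 1, q odd prime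
    obtain ⟨q, hq, hqm, hqminfac⟩ :
        ∃ q, q.Prime ∧ q ∣ m ∧ q = m.minFac :=
      ⟨m.minFac, Nat.minFac_prime hm1, Nat.minFac_dvd m, rfl⟩
    rw [← hqminfac] at hpTwo
    have hq2 : q ≠ 2 := fun h => hm2 (h ▸ hqm)
    have hq3 : 3 ≤ q := by
      have h2le := hq.two_le
      rcases Nat.lt_or_ge q 3 with h | h
      · interval_cases q
        · exact absurd rfl hq2
      · exact h
    have hqodd : q % 2 = 1 := Nat.odd_iff.mp (hq.odd_of_ne_two hq2)
    obtain ⟨t, ht⟩ : ∃ t, q = 2 * t + 1 := ⟨q / 2, by omega⟩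
    have ht1 : 1 ≤ t := by omega
    have hmn : m ∣ n := ⟨2 ^ a, by rw [mul_comm]; exact hfact.symm⟩
    have hqn : q ∣ n := hqm.trans hmn
    obtain ⟨s, hns⟩ : ∃ s, n = 2 * q * s := by
      refine ⟨2 ^ (a - 1) * (m / q), ?_⟩
      have h2a : (2:ℕ) ^ a = 2 * 2 ^ (a - 1) := by
        rw [← pow_succ']
        congr 1
        omega
      calc n = 2 ^ a * m := hfact.symm
        _ = (2 * 2 ^ (a - 1)) * (q * (m / q)) := by rw [h2a, Nat.mul_div_cancel' hqm]
        _ = 2 * q * (2 ^ (a - 1) * (m / q)) := by ring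
    have hs1 : 1 ≤ s := by
      rcases Nat.eq_zero_or_pos s with rfl | h
      · rw [mul_zero] at hns; omega
      · exact h
    have hpair : ({2, q} : Finset ℕ).card = 2 := by
      rw [Finset.card_insert_of_notMem (by simpa using (Ne.symm hq2)),
        Finset.card_singleton]
    have hsub : ({2, q} : Finset ℕ) ⊆ n.primeFactors := by
      intro p hp
      simp only [Finset.mem_insert, Finset.mem_singleton] at hp
      rcases hp with rfl | rfl
      · exact Nat.mem_primeFactors.mpr ⟨Nat.prime_two, h2d, hn0⟩
      · exact Nat.mem_primeFactors.mpr ⟨hq, hqn, hn0⟩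
    have hν2 : 2 ≤ nuFun n := by
      calc 2 = ({2, q} : Finset ℕ).card := hpair.symm
           _ ≤ _ := Finset.card_le_card hsub
    have hν1 : ¬ (nuFun n = 1) := by omega
    -- branch condition ↔ n = 2 * q
    have hPiff : (nuFun n = 2 ∧ n.factorization 2 = 1 ∧ n.factorization q = 1) ↔ n = 2 * q := by
      constructor
      · rintro ⟨hnu, hfa2, hfaq⟩
        have ha1' : a = 1 := by omega
        have hfmq : m.factorization q = 1 := by
          have hmul := Nat.factorization_mul (a := 2 ^ a) (b := m) (by positivity) hm0
          rw [hfact] at hmul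
          have heval := congrArg (fun f => f q) hmul
          simp only [Finsupp.add_apply] at heval
          rw [Nat.Prime.factorization_pow Nat.prime_two] at heval
          rw [Finsupp.single_apply, if_neg (fun h => hq2 h.symm)] at heval
          omega
        have hpfn : n.primeFactors = {2, q} := by
          refine (Finset.eq_of_subset_of_card_le hsub ?_).symm
          have hcard2 : n.primeFactors.card = 2 := hnu
          rw [hcard2, hpair]
        have hpfm : m.primeFactors = {q} := by
          apply Finset.Subset.antisymm
          · intro p hp
            have hpn : p ∈ n.primeFactors := Nat.primeFactors_mono hmn hn0 hp
            rw [hpfn] at hpn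
            simp only [Finset.mem_insert, Finset.mem_singleton] at hpn
            rcases hpn with rfl | rfl
            · exact absurd ((Nat.mem_primeFactors.mp hp).2.1) hm2
            · exact Finset.mem_singleton_self _
          · intro p hp
            rw [Finset.mem_singleton] at hp
            subst hp
            exact Nat.mem_primeFactors.mpr ⟨hq, hqm, hm0⟩
        have hmq' : m = q := by
          have hprod := Nat.factorization_prod_pow_eq_self hm0
          rw [Finsupp.prod] at hprod
          rw [Nat.support_factorization, hpfm, Finset.prod_singleton, hfmq, pow_one] at hprod
          exact hprod.symm
        rw [← hfact, ha1', hmq', pow_one]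
      · intro h
        have hq2' : ¬ (2 = q) := fun hh => hq2 hh.symm
        have hfn : n.factorization = Nat.factorization 2 + Nat.factorization q := by
          rw [h, Nat.factorization_mul (by norm_num) (by omega)]
        have hf2 : n.factorization 2 = 1 := by
          rw [hfn]
          rw [Nat.Prime.factorization Nat.prime_two, hq.factorization]
          simp [Finsupp.single_apply, hq2, hq2']
        have hfq : n.factorization q = 1 := by
          rw [hfn]
          rw [Nat.Prime.factorization Nat.prime_two, hq.factorization]
          simp [Finsupp.single_apply, hq2, hq2']
        refine ⟨?_, hf2, hfq⟩
        have hun : ({2} ∪ {q} : Finset ℕ) = {2, q} := by ext p; simp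
        rw [nuFun, h, Nat.primeFactors_mul (by norm_num) (by omega),
          Nat.Prime.primeFactors Nat.prime_two, Nat.Prime.primeFactors hq, hun, hpair]
    have hcond : (nuFun n = 2 ∧ n.factorization (pOne n) = 1 ∧ n.factorization (pTwo n) = 1)
        ↔ n = 2 * q := by
      rw [hp1, hpTwo]
      exact hPiff
    by_cases hP : n = 2 * q
    · have hval : gFun n = t + 1 := by
        rw [gFun, if_neg hν1, if_pos (hcond.mpr hP), hp1, hpTwo]
        have h1 : (2 - 1) * (q - 1) = 2 * t := by omega
        have h2 : n * ((2 - 1) * (q - 1)) = 2 * 2 * q * t := by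
          rw [h1, hP]; ring
        rw [h2, Nat.mul_div_cancel_left t (by positivity)]
      have hn4 : n = 4 * t + 2 := by omega
      have hRfalse : ¬ ((∃ α : ℕ, 2 ≤ α ∧ n = 2 ^ α) ∨ (∃ p : ℕ, p.Prime ∧ n = 4 * p)) := by
        rintro (⟨α, hα, hpow⟩ | ⟨p, hp, hpeq⟩)
        · have h4 : (4:ℕ) ∣ n := by
            rw [hpow]
            have : (2:ℕ) ^ 2 ∣ 2 ^ α := pow_dvd_pow 2 hα
            simpa using this
          obtain ⟨c, hc⟩ := h4
          omega
        · omega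
      constructor
      · rw [hval]; omega
      · rw [hval]
        constructor
        · intro h; omega
        · intro h; exact absurd h hRfalse
    · have hs2 : 2 ≤ s := by
        rcases Nat.lt_or_ge s 2 with h | h
        · interval_cases s
          · exact absurd (by rw [hns]; ring) hP
        · exact h
      have hval : gFun n = s * t + 2 := by
        rw [gFun, if_neg hν1, if_neg (by rw [hcond]; exact hP), hp1, hpTwo]
        have h1 : (2 - 1) * (q - 1) = 2 * t := by omega
        have h2 : n * ((2 - 1) * (q - 1)) = 2 * 2 * q * (s * t) := by
          rw [h1, hns]; ring
        rw [h2, Nat.mul_div_cancel_left (s * t) (by positivity)]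
      have hnu : n = 4 * (s * t) + 2 * s := by rw [hns, ht]; ring
      have hseq : (s = 2) ↔ n = 4 * q := by
        constructor
        · intro h; rw [hns, h]; ring
        · intro h
          have h22 : 2 * q * s = 2 * q * 2 := by rw [← hns, h]; ring
          exact Nat.eq_of_mul_eq_mul_left (by positivity) h22
      have hRiff : ((∃ α : ℕ, 2 ≤ α ∧ n = 2 ^ α) ∨ (∃ p : ℕ, p.Prime ∧ n = 4 * p))
          ↔ n = 4 * q := by
        constructor
        · rintro (⟨α, hα, hpow⟩ | ⟨p, hp, hpeq⟩)
          · exfalso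
            have hqd : q ∣ 2 ^ α := hpow ▸ hqn
            have hdvd2 := hq.dvd_of_dvd_pow hqd
            have := Nat.le_of_dvd (by norm_num) hdvd2
            omega
          · have hcop : q.Coprime 4 := by
              have h1 : q.Coprime 2 := (Nat.coprime_primes hq Nat.prime_two).mpr hq2
              have h4 : q.Coprime (2 ^ 2) := h1.pow_right 2
              norm_num at h4
              exact h4
            have hqp : q ∣ p := hcop.dvd_of_dvd_mul_left (hpeq ▸ hqn)
            have : q = p := (Nat.prime_dvd_prime_iff_eq hq hp).mp hqp
            rw [hpeq, this]
        · intro h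
          exact Or.inr ⟨q, hq, h⟩
      refine ⟨by rw [hval]; omega, ?_⟩
      rw [hval, hRiff, ← hseq]
      constructor
      · intro h; omega
      · intro h; omega


end Aux

/-- For even `n ≥ 4`, `δ_E` is a special basic set of cardinality `⌈(n+4)/4⌉` (which is
`(n+7)/4` in integer division), so `γ'(Sₙ) ≤ ⌈(n+4)/4⌉`; moreover `g(n) ≤ ⌈(n+4)/4⌉`,
with equality iff `n` is a power `2^α` (`α ≥ 2`) or `n = 4q` with `q` prime. -/
theorem deltaE_specialBasicSet (n : ℕ) (hn : 4 ≤ n) (he : Even n) :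
    IsSpecialBasicSet (deltaE n) ∧
    (deltaE n).card = (n + 7) / 4 ∧
    specialNormalCoveringNumber n ≤ (n + 7) / 4 ∧
    gFun n ≤ (n + 7) / 4 ∧
    (gFun n = (n + 7) / 4 ↔
      (∃ α : ℕ, 2 ≤ α ∧ n = 2 ^ α) ∨ (∃ q : ℕ, q.Prime ∧ n = 4 * q)) := by
  obtain ⟨b, hb⟩ : ∃ b, n = 2 * b := by
    obtain ⟨c, hc⟩ := he
    exact ⟨c, by omega⟩
  subst hb
  have hb2 : 2 ≤ b := by omega
  have hdiv : 2 * b / 2 = b := by omega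
  have hspecial : IsSpecialBasicSet (deltaE (2 * b)) := by
    classical
    refine ⟨⟨?_, ?_⟩, ?_⟩
    · intro H hH
      simp only [deltaE, Finset.mem_union, Finset.mem_image, Finset.mem_filter,
        Finset.mem_Ico, Finset.mem_insert, Finset.mem_singleton] at hH
      rcases hH with ⟨x, ⟨⟨hx1, hx2⟩, hxe⟩, rfl⟩ | rfl | rfl
      · exact Pstab_ne_top (by omega) (by omega)
      · rw [hdiv]
        exact blockStab_ne_top hb2 rfl
      · exact alternating_ne_top (by omega)
    · intro g
      exact cyclic_cover hb2 g
    · intro M hM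
      rcases hM with hcyc | hmeta
      · obtain ⟨g, hg⟩ := hcyc.exists_generator
        obtain ⟨H, hH, k, hk⟩ := cyclic_cover hb2 (g : Equiv.Perm (Fin (2 * b)))
        refine ⟨H, hH, k, ?_⟩
        intro x hx
        obtain ⟨j, hj⟩ := Subgroup.mem_zpowers_iff.mp (hg ⟨x, hx⟩)
        have hxj : (g : Equiv.Perm (Fin (2 * b))) ^ j = x := by
          have := congrArg (Subtype.val) hj
          simpa using this
        rw [← hxj, show k * (g : Equiv.Perm (Fin (2 * b))) ^ j * k⁻¹
          = (k * (g : Equiv.Perm (Fin (2 * b))) * k⁻¹) ^ j from (conj_zpow).symm]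
        exact Subgroup.zpow_mem H hk j
      · exact metacyclic_cover hb2 M hmeta
  refine ⟨hspecial, deltaE_card hb2, ?_, (gFun_facts (2 * b) hn he).1,
    (gFun_facts (2 * b) hn he).2⟩
  exact Nat.sInf_le ⟨deltaE (2 * b), hspecial, deltaE_card hb2⟩
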